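/- Any arrangement in R^R consisting of N families of D parallel hyperplanes partitions R^R into at most sum over r from 0 to R of D^r * binomial(N, r) regions. -/

import Mathlib

open Finset

noncomputable section
open scoped Classical

variable {V : Type} [AddCommGroup V] [Module ℝ V]

/-- The finset of realizable sign patterns. -/
def RS (N D : ℕ) (V : Type) [AddCommGroup V] [Module ℝ V]
    (g : Fin N → V →ₗ[ℝ] ℝ) (h : Fin N → Fin D → ℝ) :
    Finset (Fin N → Fin D → Bool) :=
  Finset.univ.filter (fun s => ∃ v : V, ∀ i d, (s i d = true ↔ h i d < g i v))

lemma mem_RS {N D : ℕ} {g : Fin N → V →ₗ[ℝ] ℝ} {h : Fin N → Fin D → ℝ}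
    {s : Fin N → Fin D → Bool} :
    s ∈ RS N D V g h ↔ ∃ v : V, ∀ i d, (s i d = true ↔ h i d < g i v) := by
  simp [RS]

lemma exists_on_segment (f : V →ₗ[ℝ] ℝ) (t : ℝ) (v₁ v₂ : V)
    (h1 : f v₁ ≤ t) (h2 : t < f v₂) :
    ∃ a : ℝ, a ∈ Set.Icc (0:ℝ) 1 ∧ f (v₁ + a • (v₂ - v₁)) = t := by
  have hlt : f v₁ < f v₂ := lt_of_le_of_lt h1 h2
  have hne : f v₂ - f v₁ ≠ 0 := sub_ne_zero.2 hlt.ne'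
  refine ⟨(t - f v₁) / (f v₂ - f v₁),
    ⟨div_nonneg (sub_nonneg.2 h1) (sub_pos.2 hlt).le,
     (div_le_one (sub_pos.2 hlt)).2 (by linarith)⟩, ?_⟩
  simp only [map_add, map_smul, map_sub, smul_eq_mul]
  field_simp
  ring

lemma combo_iff (f : V →ₗ[ℝ] ℝ) (c : ℝ) (v₁ v₂ : V) (a : ℝ)
    (ha : a ∈ Set.Icc (0:ℝ) 1) (b : Bool)
    (h1 : b = true ↔ c < f v₁) (h2 : b = true ↔ c < f v₂) :
    (b = true ↔ c < f (v₁ + a • (v₂ - v₁))) := by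
  obtain ⟨ha0, ha1⟩ := ha
  have hval : f (v₁ + a • (v₂ - v₁)) = f v₁ + a * (f v₂ - f v₁) := by
    simp [map_add, map_smul, map_sub, smul_eq_mul]
  rw [hval]
  cases b with
  | true =>
    simp only [true_iff] at h1 h2 ⊢
    nlinarith [mul_nonneg (sub_nonneg.2 ha1) (sub_pos.2 h1).le, mul_nonneg ha0 (sub_pos.2 h2).le]
  | false =>
    simp only [Bool.false_eq_true, false_iff, not_lt] at h1 h2 ⊢
    nlinarith [mul_nonneg (sub_nonneg.2 ha1) (sub_nonneg.2 h1), mul_nonneg ha0 (sub_nonneg.2 h2)]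

lemma fiber_bound (N D : ℕ) (g : Fin (N+1) → V →ₗ[ℝ] ℝ) (h : Fin (N+1) → Fin D → ℝ)
    (τ : Fin N → Fin D → Bool) :
    ((RS (N+1) D V g h).filter (fun s => (fun i => s i.castSucc) = τ)).card ≤
      1 + (Finset.univ.filter (fun d : Fin D =>
        ∃ v : V, (∀ i d', (τ i d' = true ↔ h i.castSucc d' < g i.castSucc v)) ∧
          g (Fin.last N) v = h (Fin.last N) d)).card := by
  set hN : Fin D → ℝ := h (Fin.last N) with hhN
  set Dgood : Finset (Fin D) := Finset.univ.filter (fun d : Fin D =>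
        ∃ v : V, (∀ i d', (τ i d' = true ↔ h i.castSucc d' < g i.castSucc v)) ∧
          g (Fin.last N) v = hN d) with hDgood
  set H : (Fin (N+1) → Fin D → Bool) → Finset (Fin D) :=
    fun s => Finset.univ.filter (fun d => s (Fin.last N) d = true ∧ d ∈ Dgood) with hH
  set φ : (Fin (N+1) → Fin D → Bool) → Option (Fin D) := fun s =>
    if hs : (H s).Nonempty then
      some (Finset.exists_max_image (H s) hN hs).choose
    else none with hφ
  have hφspec : ∀ s, ∀ d ∈ H s, ∃ d₁ ∈ H s, φ s = some d₁ ∧ hN d ≤ hN d₁ := by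
    intro s d hd
    have hs : (H s).Nonempty := ⟨d, hd⟩
    obtain ⟨hmem, hmax⟩ := (Finset.exists_max_image (H s) hN hs).choose_spec
    exact ⟨_, hmem, by rw [hφ]; simp [hs], hmax d hd⟩
  -- key cross lemma
  have key : ∀ s₁ s₂, s₁ ∈ RS (N+1) D V g h → s₂ ∈ RS (N+1) D V g h →
      (fun i => s₁ i.castSucc) = τ → (fun i => s₂ i.castSucc) = τ →
      φ s₁ = φ s₂ → ∀ d₀ : Fin D,
      s₁ (Fin.last N) d₀ = false → s₂ (Fin.last N) d₀ = true → False := by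
    intro s₁ s₂ hs₁ hs₂ hτ₁ hτ₂ hφeq d₀ hb₁ hb₂
    obtain ⟨v₁, hv₁⟩ := mem_RS.1 hs₁
    obtain ⟨v₂, hv₂⟩ := mem_RS.1 hs₂
    have hle : g (Fin.last N) v₁ ≤ hN d₀ := by
      have := (hv₁ (Fin.last N) d₀)
      rw [hb₁] at this
      exact not_lt.1 fun hc => Bool.false_ne_true (this.2 hc)
    have hlt : hN d₀ < g (Fin.last N) v₂ := (hv₂ (Fin.last N) d₀).1 hb₂
    obtain ⟨a, ha, hfa⟩ := exists_on_segment (g (Fin.last N)) (hN d₀) v₁ v₂ hle hlt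
    -- the point v* realizes τ and lies on hyperplane d₀
    have hd₀ : d₀ ∈ Dgood := by
      rw [hDgood]
      simp only [Finset.mem_filter, Finset.mem_univ, true_and]
      refine ⟨v₁ + a • (v₂ - v₁), fun i d' => ?_, hfa⟩
      have e₁ : τ i d' = s₁ i.castSucc d' := by rw [← hτ₁]
      have e₂ : τ i d' = s₂ i.castSucc d' := by rw [← hτ₂]
      have c₁ := hv₁ i.castSucc d'; rw [← e₁] at c₁
      have c₂ := hv₂ i.castSucc d'; rw [← e₂] at c₂
      exact combo_iff (g i.castSucc) (h i.castSucc d') v₁ v₂ a ha _ c₁ c₂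
    have hd₀H : d₀ ∈ H s₂ := by
      simp only [hH, Finset.mem_filter, Finset.mem_univ, true_and]
      exact ⟨hb₂, hd₀⟩
    obtain ⟨d₁, hd₁H, hφ₂, hd₁max⟩ := hφspec s₂ d₀ hd₀H
    rw [← hφeq] at hφ₂
    -- so d₁ ∈ H s₁
    have hd₁H₁ : d₁ ∈ H s₁ := by
      by_cases hs : (H s₁).Nonempty
      · obtain ⟨hmem, _⟩ := (Finset.exists_max_image (H s₁) hN hs).choose_spec
        have : φ s₁ = some (Finset.exists_max_image (H s₁) hN hs).choose := by
          rw [hφ]; simp [hs]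
        rw [this] at hφ₂
        injection hφ₂ with hh'
        rwa [← hh']
      · rw [hφ] at hφ₂; simp [hs] at hφ₂
    have hb₁d₁ : s₁ (Fin.last N) d₁ = true := by
      simp only [hH, Finset.mem_filter] at hd₁H₁
      exact hd₁H₁.2.1
    have : hN d₁ < g (Fin.last N) v₁ := (hv₁ (Fin.last N) d₁).1 hb₁d₁
    linarith
  -- now the injection
  have hinj : Set.InjOn φ ((RS (N+1) D V g h).filter
      (fun s => (fun i => s i.castSucc) = τ) : Finset _) := by
    intro s₁ hs₁ s₂ hs₂ hφeq
    simp only [Finset.coe_filter, Set.mem_setOf_eq] at hs₁ hs₂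
    obtain ⟨hm₁, hτ₁⟩ := hs₁
    obtain ⟨hm₂, hτ₂⟩ := hs₂
    funext i d
    refine Fin.lastCases ?_ (fun j => ?_) i
    · by_contra hne
      cases hb : s₁ (Fin.last N) d with
      | false =>
        have hb2 : s₂ (Fin.last N) d = true := by
          cases hb2 : s₂ (Fin.last N) d
          · exact absurd (hb.trans hb2.symm) hne
          · rfl
        exact key s₁ s₂ hm₁ hm₂ hτ₁ hτ₂ hφeq d hb hb2
      | true =>
        have hb2 : s₂ (Fin.last N) d = false := by
          cases hb2 : s₂ (Fin.last N) d
          · rfl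
          · exact absurd (hb.trans hb2.symm) hne
        exact key s₂ s₁ hm₂ hm₁ hτ₂ hτ₁ hφeq.symm d hb2 hb
    · have := congrFun (congrFun (hτ₁.trans hτ₂.symm) j) d
      exact this
  have hmaps : ∀ s ∈ (RS (N+1) D V g h).filter (fun s => (fun i => s i.castSucc) = τ),
      φ s ∈ insert none (Dgood.image some) := by
    intro s _
    by_cases hs : (H s).Nonempty
    · obtain ⟨d, hd⟩ := hs
      obtain ⟨d₁, hd₁H, hspec, _⟩ := hφspec s d hd
      rw [hspec]
      simp only [hH, Finset.mem_filter] at hd₁H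
      exact Finset.mem_insert_of_mem (Finset.mem_image_of_mem some hd₁H.2.2)
    · rw [hφ]; simp [hs]
  calc ((RS (N+1) D V g h).filter (fun s => (fun i => s i.castSucc) = τ)).card
      ≤ (insert none (Dgood.image some)).card :=
        Finset.card_le_card_of_injOn φ hmaps hinj
    _ ≤ (Dgood.image some).card + 1 := Finset.card_insert_le _ _
    _ ≤ Dgood.card + 1 := Nat.add_le_add_right (Finset.card_image_le) 1
    _ = 1 + Dgood.card := by omega

lemma pascal_sum (D N k : ℕ) :
    ∑ r ∈ Finset.range (k+2), D^r * (N+1).choose r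
      = ∑ r ∈ Finset.range (k+2), D^r * N.choose r
        + D * ∑ r ∈ Finset.range (k+1), D^r * N.choose r := by
  rw [Finset.sum_range_succ' (fun r => D^r * (N+1).choose r) (k+1),
      Finset.sum_range_succ' (fun r => D^r * N.choose r) (k+1)]
  simp only [Nat.choose_succ_succ, Nat.choose_zero_right, pow_zero, mul_add,
    Finset.sum_add_distrib, Finset.mul_sum, pow_succ, one_mul, Nat.succ_eq_add_one]
  rw [show (∑ x ∈ Finset.range (k+1), D * (D^x * N.choose x))
      = ∑ x ∈ Finset.range (k+1), D^x * D * N.choose x from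
    Finset.sum_congr rfl fun x _ => by ring]
  omega

lemma ker_finrank [FiniteDimensional ℝ V] (gN : V →ₗ[ℝ] ℝ) (hg : gN ≠ 0) :
    Module.finrank ℝ (LinearMap.ker gN) + 1 = Module.finrank ℝ V := by
  have h1 := LinearMap.finrank_range_add_finrank_ker gN
  obtain ⟨u, hu⟩ : ∃ u, gN u ≠ 0 := by
    by_contra hc
    push_neg at hc
    exact hg (LinearMap.ext fun v => by simp [hc])
  have hr : LinearMap.range gN = ⊤ := by
    rw [eq_top_iff]
    rintro y -
    exact ⟨(y / gN u) • u, by simp [map_smul, smul_eq_mul, div_mul_cancel₀ _ hu]⟩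
  rw [hr] at h1
  simp only [finrank_top, Module.finrank_self] at h1
  omega

theorem RS_card_le (N : ℕ) : ∀ (V : Type) [AddCommGroup V] [Module ℝ V]
    [FiniteDimensional ℝ V] (D : ℕ) (g : Fin N → V →ₗ[ℝ] ℝ) (h : Fin N → Fin D → ℝ),
    (RS N D V g h).card ≤
      ∑ r ∈ Finset.range (Module.finrank ℝ V + 1), D ^ r * N.choose r := by
  induction N with
  | zero =>
    intro V _ _ _ D g h
    calc (RS 0 D V g h).card ≤ Fintype.card (Fin 0 → Fin D → Bool) := by
          rw [← Finset.card_univ]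
          exact Finset.card_le_card (Finset.filter_subset _ _)
      _ = 1 := by simp
      _ = (fun r => D ^ r * Nat.choose 0 r) 0 := by simp
      _ ≤ ∑ r ∈ Finset.range (Module.finrank ℝ V + 1), D ^ r * Nat.choose 0 r :=
          Finset.single_le_sum (f := fun r => D ^ r * Nat.choose 0 r)
            (fun i _ => Nat.zero_le _) (Finset.mem_range.2 (Nat.succ_pos _))
  | succ N ih =>
    intro V _ _ _ D g h
    set gN := g (Fin.last N) with hgN
    set g' : Fin N → V →ₗ[ℝ] ℝ := fun i => g i.castSucc with hg'
    set h' : Fin N → Fin D → ℝ := fun i => h i.castSucc with hh'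
    have hmapsto : ∀ s ∈ RS (N+1) D V g h, (fun i => s i.castSucc) ∈ RS N D V g' h' := by
      intro s hs
      obtain ⟨v, hv⟩ := mem_RS.1 hs
      exact mem_RS.2 ⟨v, fun i d => hv i.castSucc d⟩
    have hmono : ∑ r ∈ Finset.range (Module.finrank ℝ V + 1), D ^ r * N.choose r ≤
        ∑ r ∈ Finset.range (Module.finrank ℝ V + 1), D ^ r * (N+1).choose r :=
      Finset.sum_le_sum fun r _ =>
        Nat.mul_le_mul_left _ (Nat.choose_le_choose r (Nat.le_succ N))
    by_cases hg0 : gN = 0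
    · -- last functional is zero : deletion is injective
      have hinj : Set.InjOn (fun (s : Fin (N+1) → Fin D → Bool) (i : Fin N) => s i.castSucc)
          (↑(RS (N+1) D V g h) : Set (Fin (N+1) → Fin D → Bool)) := by
        intro s₁ hs₁ s₂ hs₂ heq
        simp only [Finset.mem_coe] at hs₁ hs₂
        obtain ⟨v₁, hv₁⟩ := mem_RS.1 hs₁
        obtain ⟨v₂, hv₂⟩ := mem_RS.1 hs₂
        funext i d
        refine Fin.lastCases ?_ (fun j => congrFun (congrFun heq j) d) i
        have e₁ := hv₁ (Fin.last N) d
        have e₂ := hv₂ (Fin.last N) d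
        rw [← hgN, hg0] at e₁ e₂
        simp only [LinearMap.zero_apply] at e₁ e₂
        rw [Bool.eq_iff_iff, e₁, e₂]
      calc (RS (N+1) D V g h).card ≤ (RS N D V g' h').card :=
            Finset.card_le_card_of_injOn _ hmapsto hinj
        _ ≤ ∑ r ∈ Finset.range (Module.finrank ℝ V + 1), D ^ r * N.choose r := ih V D g' h'
        _ ≤ _ := hmono
    · -- main case : deletion + restriction
      have hker := ker_finrank gN hg0
      set k := Module.finrank ℝ (LinearMap.ker gN) with hk
      obtain ⟨u, hu⟩ : ∃ u, gN u ≠ 0 := by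
        by_contra hc
        push_neg at hc
        exact hg0 (LinearMap.ext fun v => by simp [hc])
      -- choose a base point on each hyperplane of the last family
      have hvd : ∀ d : Fin D, ∃ vd : V, gN vd = h (Fin.last N) d := fun d =>
        ⟨(h (Fin.last N) d / gN u) • u, by
          simp [map_smul, smul_eq_mul, div_mul_cancel₀ _ hu]⟩
      choose vd hvd using hvd
      set P : (Fin N → Fin D → Bool) → Fin D → Prop := fun τ d =>
        ∃ v : V, (∀ i d', (τ i d' = true ↔ h i.castSucc d' < g i.castSucc v)) ∧
          g (Fin.last N) v = h (Fin.last N) d with hP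
      have step1 : (RS (N+1) D V g h).card ≤ (RS N D V g' h').card +
          ∑ τ ∈ RS N D V g' h', (Finset.univ.filter (fun d : Fin D => P τ d)).card := by
        rw [Finset.card_eq_sum_card_fiberwise hmapsto]
        calc ∑ τ ∈ RS N D V g' h',
              ((RS (N+1) D V g h).filter (fun s => (fun i => s i.castSucc) = τ)).card
            ≤ ∑ τ ∈ RS N D V g' h',
              (1 + (Finset.univ.filter (fun d : Fin D => P τ d)).card) :=
              Finset.sum_le_sum fun τ _ => fiber_bound N D g h τ
          _ = _ := by
              rw [Finset.sum_add_distrib, Finset.sum_const, smul_eq_mul, mul_one]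
      have hswap : ∑ τ ∈ RS N D V g' h', (Finset.univ.filter (fun d : Fin D => P τ d)).card
          = ∑ d : Fin D, ((RS N D V g' h').filter (fun τ => P τ d)).card := by
        simp only [Finset.card_filter]
        rw [Finset.sum_comm]
      -- restriction bound for each offset of the last family
      set W := LinearMap.ker gN with hW
      set g'' : Fin N → W →ₗ[ℝ] ℝ := fun i => (g' i).domRestrict W with hg''
      have step2 : ∀ d : Fin D, ((RS N D V g' h').filter (fun τ => P τ d)).card ≤
          ∑ r ∈ Finset.range (k + 1), D ^ r * N.choose r := by
        intro d
        set h'' : Fin N → Fin D → ℝ := fun i d' => h' i d' - g' i (vd d) with hh''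
        have hsub : ((RS N D V g' h').filter (fun τ => P τ d)) ⊆ RS N D W g'' h'' := by
          intro τ hτ
          obtain ⟨-, v, hrel, hgv⟩ := Finset.mem_filter.1 hτ
          have hwker : v - vd d ∈ LinearMap.ker gN := by
            rw [LinearMap.mem_ker, map_sub, hgv, hvd d, sub_self]
          refine mem_RS.2 ⟨⟨v - vd d, hwker⟩, fun i d' => ?_⟩
          have : g'' i ⟨v - vd d, hwker⟩ = g' i v - g' i (vd d) := by
            simp [hg'', LinearMap.domRestrict_apply, map_sub]
          rw [this, hh'']
          constructor
          · intro hb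
            have := (hrel i d').1 hb
            simp only [hg', hh'] at *
            linarith
          · intro hlt
            refine (hrel i d').2 ?_
            simp only [hg', hh'] at *
            linarith
        calc ((RS N D V g' h').filter (fun τ => P τ d)).card
            ≤ (RS N D W g'' h'').card := Finset.card_le_card hsub
          _ ≤ ∑ r ∈ Finset.range (Module.finrank ℝ W + 1), D ^ r * N.choose r :=
              ih W D g'' h''
          _ = ∑ r ∈ Finset.range (k + 1), D ^ r * N.choose r := by rw [← hk]
      have hsum : ∑ d : Fin D, ((RS N D V g' h').filter (fun τ => P τ d)).card ≤
          D * ∑ r ∈ Finset.range (k + 1), D ^ r * N.choose r := by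
        calc ∑ d : Fin D, ((RS N D V g' h').filter (fun τ => P τ d)).card
            ≤ Finset.univ.card • (∑ r ∈ Finset.range (k + 1), D ^ r * N.choose r) :=
              Finset.sum_le_card_nsmul _ _ _ (fun d _ => step2 d)
          _ = D * ∑ r ∈ Finset.range (k + 1), D ^ r * N.choose r := by
              simp [Finset.card_univ, Nat.smul_one_eq_cast]
      have hA : (RS N D V g' h').card ≤
          ∑ r ∈ Finset.range (k + 2), D ^ r * N.choose r := by
        have := ih V D g' h'
        rwa [← hker] at this
      have hfinal : ∑ r ∈ Finset.range (Module.finrank ℝ V + 1), D ^ r * (N+1).choose r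
          = ∑ r ∈ Finset.range (k + 2), D ^ r * N.choose r
            + D * ∑ r ∈ Finset.range (k + 1), D ^ r * N.choose r := by
        rw [← hker]
        exact pascal_sum D N k
      rw [hfinal]
      calc (RS (N+1) D V g h).card
          ≤ (RS N D V g' h').card +
            ∑ τ ∈ RS N D V g' h', (Finset.univ.filter (fun d : Fin D => P τ d)).card := step1
        _ = (RS N D V g' h').card +
            ∑ d : Fin D, ((RS N D V g' h').filter (fun τ => P τ d)).card := by rw [hswap]
        _ ≤ _ := Nat.add_le_add hA hsum

/-- Any arrangement in `ℝ^R` consisting of `N` families of `D`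
parallel hyperplanes partitions `ℝ^R` into at most
`∑_{r=0}^{R} D^r * (N choose r)` regions.

Family `i` has normal `m i ≠ 0` and `D` distinct offsets `h i d`; a region is a
connected component of the complement of the union of all `N * D` hyperplanes. -/
theorem parallel_families_regions_le (N R D : ℕ)
    (m : Fin N → (Fin R → ℝ)) (h : Fin N → Fin D → ℝ)
    (hm : ∀ i, m i ≠ 0)
    (hh : ∀ i, Function.Injective (h i)) :
    Nat.card (ConnectedComponents
      ↥((⋃ i, ⋃ d, {v : Fin R → ℝ | ∑ j, m i j * v j = h i d})ᶜ)) ≤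
      ∑ r ∈ Finset.range (R + 1), D ^ r * N.choose r := by
  set X : Set (Fin R → ℝ) :=
    (⋃ i, ⋃ d, {v : Fin R → ℝ | ∑ j, m i j * v j = h i d})ᶜ with hX
  set gl : Fin N → (Fin R → ℝ) →ₗ[ℝ] ℝ :=
    fun i => ∑ j, m i j • LinearMap.proj j with hgl
  have hgl_apply : ∀ i v, gl i v = ∑ j, m i j * v j := by
    intro i v
    simp [hgl, LinearMap.sum_apply, LinearMap.smul_apply, LinearMap.proj_apply,
      smul_eq_mul]
  have hXmem : ∀ v, v ∈ X ↔ ∀ (i : Fin N) (d : Fin D), gl i v ≠ h i d := by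
    intro v
    simp only [hX, Set.mem_compl_iff, Set.mem_iUnion, Set.mem_setOf_eq, not_exists,
      hgl_apply]
  set Scompl : Finset (Fin N → Fin D → Bool) :=
    Finset.univ.filter (fun s => ∃ v ∈ X, ∀ i d, (s i d = true ↔ h i d < gl i v))
    with hS
  -- choose a witness for each pattern in Scompl
  have hwit : ∀ s : {s // s ∈ Scompl}, ∃ v : ↥X,
      ∀ i d, ((s : Fin N → Fin D → Bool) i d = true ↔ h i d < gl i (v : Fin R → ℝ)) := by
    rintro ⟨s, hs⟩
    obtain ⟨v, hvX, hv⟩ := (Finset.mem_filter.1 hs).2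
    exact ⟨⟨v, hvX⟩, hv⟩
  choose w hw using hwit
  have hsurj : Function.Surjective
      (fun s : {s // s ∈ Scompl} => ((w s : ↥X) : ConnectedComponents ↥X)) := by
    intro c
    obtain ⟨x, rfl⟩ := ConnectedComponents.surjective_coe c
    set sx : Fin N → Fin D → Bool := fun i d => decide (h i d < gl i (x : Fin R → ℝ))
      with hsx
    have hsxm : sx ∈ Scompl := by
      rw [hS]
      simp only [Finset.mem_filter, Finset.mem_univ, true_and]
      exact ⟨x, x.2, fun i d => by simp [hsx]⟩
    refine ⟨⟨sx, hsxm⟩, ?_⟩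
    set y := w ⟨sx, hsxm⟩ with hy
    have hyspec := hw ⟨sx, hsxm⟩
    -- the cell of the pattern sx
    set Cell : Set (Fin R → ℝ) :=
      {v | ∀ i d, if sx i d = true then h i d < gl i v else gl i v < h i d} with hCell
    have hconv : Convex ℝ Cell := by
      have : Cell = ⋂ i, ⋂ d,
          {v | if sx i d = true then h i d < gl i v else gl i v < h i d} := by
        ext v
        simp [hCell, Set.mem_iInter]
      rw [this]
      refine convex_iInter fun i => convex_iInter fun d => ?_
      by_cases hb : sx i d = true
      · simpa [hb] using convex_halfSpace_gt (gl i).isLinear (h i d)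
      · simpa [hb] using convex_halfSpace_lt (gl i).isLinear (h i d)
    have hCellX : Cell ⊆ X := by
      intro v hv
      rw [hXmem]
      intro i d
      have := hv i d
      by_cases hb : sx i d = true
      · rw [if_pos hb] at this
        exact (ne_of_gt this)
      · rw [if_neg hb] at this
        exact (ne_of_lt this)
    have hmemCell : ∀ z : ↥X, (∀ i d, (sx i d = true ↔ h i d < gl i (z : Fin R → ℝ))) →
        (z : Fin R → ℝ) ∈ Cell := by
      intro z hz
      intro i d
      by_cases hb : sx i d = true
      · rw [if_pos hb]
        exact (hz i d).1 hb
      · rw [if_neg hb]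
        have hne : gl i (z : Fin R → ℝ) ≠ h i d := (hXmem _).1 z.2 i d
        have hnlt : ¬ h i d < gl i (z : Fin R → ℝ) := fun hc => hb ((hz i d).2 hc)
        exact lt_of_le_of_ne (not_lt.1 hnlt) hne
    have hxc : (x : Fin R → ℝ) ∈ Cell := hmemCell x (fun i d => by simp [hsx])
    have hyc : (y : Fin R → ℝ) ∈ Cell := hmemCell y hyspec
    have hpre : IsPreconnected (Subtype.val ⁻¹' Cell : Set ↥X) := by
      rw [← Topology.IsInducing.subtypeVal.isPreconnected_image]
      have himg : (Subtype.val '' (Subtype.val ⁻¹' Cell : Set ↥X)) = Cell := by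
        rw [Subtype.image_preimage_coe]
        exact Set.inter_eq_self_of_subset_right hCellX
      rw [himg]
      exact hconv.isPreconnected
    have hxm : x ∈ (Subtype.val ⁻¹' Cell : Set ↥X) := hxc
    have hym : y ∈ (Subtype.val ⁻¹' Cell : Set ↥X) := hyc
    exact ConnectedComponents.coe_eq_coe'.2 (hpre.subset_connectedComponent hxm hym)
  have h1 : Nat.card (ConnectedComponents ↥X) ≤ Nat.card {s // s ∈ Scompl} :=
    Nat.card_le_card_of_surjective _ hsurj
  have h2 : Nat.card {s // s ∈ Scompl} = Scompl.card := Nat.card_eq_finsetCard _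
  have h3 : Scompl ⊆ RS N D (Fin R → ℝ) gl h := by
    intro s hs
    obtain ⟨v, _, hv⟩ := (Finset.mem_filter.1 hs).2
    exact mem_RS.2 ⟨v, hv⟩
  have h4 := RS_card_le N (Fin R → ℝ) D gl h
  rw [Module.finrank_fin_fun] at h4
  calc Nat.card (ConnectedComponents ↥X) ≤ Scompl.card := h1.trans_eq h2
    _ ≤ (RS N D (Fin R → ℝ) gl h).card := Finset.card_le_card h3
    _ ≤ _ := h4

end
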